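/- For every x ≥ 0, the infimum of (1/(2ξ²)) ∫₀¹ (g(s)²/φ(s)) · 1_{φ(s)>0} ds over all integrable g : [0,1] → ℝ such that the function φ(s) := v₀ + ∫₀^s g(r) dr is nonnegative on [0,1] and satisfies φ(1) = x, equals (2/ξ²)(√x − √v₀)². If x < 0 the constraint set is empty and the infimum (taken in [0,∞]) equals +∞. -/

import Mathlib

open MeasureTheory Filter Topology
open scoped ENNReal

open Set Metric

/-- a.e. version of FTC-1: the primitive of an integrable function has derivative
equal to the function almost everywhere. -/
lemma ae_hasDerivAt_primitive (G : ℝ → ℝ) (hG : Integrable G) :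
    ∀ᵐ s : ℝ, HasDerivAt (fun t => ∫ r in (0:ℝ)..t, G r) (G s) s := by
  filter_upwards [IsUnifLocDoublingMeasure.ae_tendsto_average_norm_sub
    (μ := (volume : Measure ℝ)) hG.locallyIntegrable 1] with s hs
  rw [hasDerivAt_iff_tendsto_slope]
  have hA : Tendsto (fun y : ℝ => ⨍ t in closedBall ((s+y)/2) (|y - s|/2), ‖G t - G s‖)
      (𝓝[≠] s) (𝓝 0) := by
    refine hs (fun y => (s+y)/2) (fun y => |y - s|/2) ?_ ?_
    · apply tendsto_nhdsWithin_of_tendsto_nhds_of_eventually_within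
      · have : Tendsto (fun y : ℝ => |y - s|/2) (𝓝 s) (𝓝 (|s - s|/2)) :=
          ((continuous_id.sub continuous_const).abs.div_const 2).tendsto s
        simpa using this.mono_left nhdsWithin_le_nhds
      · filter_upwards [self_mem_nhdsWithin] with y (hy : y ≠ s)
        have : y - s ≠ 0 := sub_ne_zero.2 hy
        exact mem_Ioi.2 (by positivity)
    · filter_upwards with y
      rw [mem_closedBall, Real.dist_eq, one_mul, abs_le]
      rcases le_total s y with h | h
      · rw [abs_of_nonneg (by linarith)]; constructor <;> linarith
      · rw [abs_of_nonpos (by linarith)]; constructor <;> linarith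
  rw [tendsto_iff_dist_tendsto_zero]
  refine squeeze_zero' (.of_forall fun _ => dist_nonneg) ?_ hA
  filter_upwards [self_mem_nhdsWithin] with y (hy : y ≠ s)
  have hys : y - s ≠ 0 := sub_ne_zero.2 hy
  have hint : IntervalIntegrable G volume s y := hG.intervalIntegrable
  have h1 : (∫ r in (0:ℝ)..y, G r) - (∫ r in (0:ℝ)..s, G r) = ∫ r in s..y, G r :=
    intervalIntegral.integral_interval_sub_left hG.intervalIntegrable hG.intervalIntegrable
  have h2 : slope (fun t => ∫ r in (0:ℝ)..t, G r) s y - G s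
      = (∫ r in s..y, (G r - G s)) / (y - s) := by
    rw [slope_def_field, h1, intervalIntegral.integral_sub hint intervalIntegrable_const,
      intervalIntegral.integral_const, smul_eq_mul]
    field_simp
  have hball : Set.uIoc s y ⊆ closedBall ((s+y)/2) (|y - s|/2) := by
    intro t ht
    rw [mem_closedBall, Real.dist_eq, abs_le]
    rcases le_total s y with h | h
    · rw [Set.uIoc_of_le h] at ht
      rw [abs_of_nonneg (by linarith)]
      constructor <;> linarith [ht.1, ht.2]
    · rw [Set.uIoc_of_ge h] at ht
      rw [abs_of_nonpos (by linarith)]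
      constructor <;> linarith [ht.1, ht.2]
  have hiball : IntegrableOn (fun t => ‖G t - G s‖) (closedBall ((s+y)/2) (|y - s|/2)) := by
    refine (Integrable.sub hG.integrableOn ?_).norm
    exact integrableOn_const measure_closedBall_lt_top.ne
  have hnum : ‖∫ r in s..y, (G r - G s)‖
      ≤ ∫ t in closedBall ((s+y)/2) (|y - s|/2), ‖G t - G s‖ := by
    refine (intervalIntegral.norm_integral_le_integral_norm_uIoc).trans ?_
    exact setIntegral_mono_set hiball (.of_forall fun t => norm_nonneg _)
      (HasSubset.Subset.eventuallyLE hball)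
  have hμ : (volume (closedBall ((s+y)/2) (|y - s|/2))).toReal = |y - s| := by
    rw [Real.volume_closedBall]
    rw [ENNReal.toReal_ofReal (by positivity)]
    ring
  have havg : ⨍ t in closedBall ((s+y)/2) (|y - s|/2), ‖G t - G s‖
      = |y - s|⁻¹ * ∫ t in closedBall ((s+y)/2) (|y - s|/2), ‖G t - G s‖ := by
    rw [setAverage_eq, measureReal_def, hμ, smul_eq_mul]
  rw [havg, Real.dist_eq, h2, abs_div, div_eq_inv_mul]
  gcongr
  simpa [Real.norm_eq_abs] using hnum

/-- On the zero set of a nonnegative primitive, the integrand vanishes a.e. -/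
lemma ae_zero_on_zero_set (G : ℝ → ℝ) (hG : Integrable G) (v₀ : ℝ)
    (hpos : ∀ s ∈ Icc (0:ℝ) 1, 0 ≤ v₀ + ∫ r in (0:ℝ)..s, G r) :
    ∀ᵐ s ∂(volume.restrict (Icc (0:ℝ) 1)),
      v₀ + (∫ r in (0:ℝ)..s, G r) = 0 → G s = 0 := by
  have h2 : ∀ᵐ s : ℝ, s ≠ 0 ∧ s ≠ 1 := by
    have h0 : (volume : Measure ℝ) ({0, 1} : Set ℝ) = 0 :=
      measure_union_null (measure_singleton 0) (measure_singleton 1)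
    rw [ae_iff]
    refine measure_mono_null (fun s hs => ?_) h0
    simp only [Set.mem_setOf_eq, not_and_or, not_not] at hs
    simpa using hs
  filter_upwards [ae_restrict_of_ae (ae_hasDerivAt_primitive G hG),
    ae_restrict_of_ae h2, ae_restrict_mem measurableSet_Icc] with s hs hs2 hsm hφ
  have hio : s ∈ Ioo (0:ℝ) 1 :=
    ⟨lt_of_le_of_ne hsm.1 (Ne.symm hs2.1), lt_of_le_of_ne hsm.2 hs2.2⟩
  have hloc : IsLocalMin (fun t => v₀ + ∫ r in (0:ℝ)..t, G r) s := by
    have hIcc : Icc (0:ℝ) 1 ∈ 𝓝 s := Icc_mem_nhds hio.1 hio.2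
    refine Filter.eventually_of_mem hIcc fun t ht => ?_
    simpa [hφ] using hpos t ht
  exact hloc.hasDerivAt_eq_zero (hs.const_add v₀)

/-- `ofReal` of a Bochner integral is at most the `lintegral` of `ofReal`. -/
lemma ofReal_integral_le {μ : Measure ℝ} (f : ℝ → ℝ) (hf : Integrable f μ) :
    ENNReal.ofReal (∫ s, f s ∂μ) ≤ ∫⁻ s, ENNReal.ofReal (f s) ∂μ := by
  calc ENNReal.ofReal (∫ s, f s ∂μ) ≤ ENNReal.ofReal (∫ s, max (f s) 0 ∂μ) := by
        apply ENNReal.ofReal_le_ofReal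
        exact integral_mono hf hf.pos_part fun s => le_max_left _ _
    _ = ∫⁻ s, ENNReal.ofReal (max (f s) 0) ∂μ :=
        ofReal_integral_eq_lintegral_ofReal hf.pos_part
          (.of_forall fun s => le_max_right _ _)
    _ = ∫⁻ s, ENNReal.ofReal (f s) ∂μ := by
        apply lintegral_congr fun s => ?_
        rcases le_total (f s) 0 with h | h
        · rw [max_eq_right h, ENNReal.ofReal_zero, ENNReal.ofReal_eq_zero.2 h]
        · rw [max_eq_left h]

/-- Integration by parts via Fubini: for measurable integrable `G` and `C¹` weight `lam`. -/
lemma key_identity (G : ℝ → ℝ) (hGi : Integrable G) (hGm : Measurable G)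
    (lam lam' : ℝ → ℝ) (hlam : ∀ t ∈ Icc (0:ℝ) 1, HasDerivAt lam (lam' t) t)
    (hlam'c : ContinuousOn lam' (Icc (0:ℝ) 1)) (hlam'm : Measurable lam') :
    ∫ s in Icc (0:ℝ) 1, lam s * G s =
      lam 1 * (∫ r in (0:ℝ)..1, G r) - ∫ u in Icc (0:ℝ) 1, lam' u * ∫ r in (0:ℝ)..u, G r := by
  set μ := volume.restrict (Icc (0:ℝ) 1) with hμdef
  obtain ⟨C, hC⟩ := isCompact_Icc.exists_bound_of_continuousOn hlam'c
  have hC0 : 0 ≤ C := (norm_nonneg _).trans (hC 0 (by constructor <;> norm_num))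
  -- the Fubini kernel
  set F : ℝ × ℝ → ℝ := fun p => if p.1 < p.2 then G p.1 * lam' p.2 else 0 with hFdef
  have hFm : Measurable F := by
    refine Measurable.ite (measurableSet_lt measurable_fst measurable_snd) ?_ measurable_const
    exact (hGm.comp measurable_fst).mul (hlam'm.comp measurable_snd)
  have hμIcc : μ Set.univ < ⊤ := by
    rw [hμdef, Measure.restrict_apply_univ, Real.volume_Icc]
    exact ENNReal.ofReal_lt_top
  have hsnd : ∀ᵐ p ∂(μ.prod μ), p.2 ∈ Icc (0:ℝ) 1 := by
    have hset : {p : ℝ × ℝ | p.2 ∈ Icc (0:ℝ) 1}ᶜ = Set.univ ×ˢ (Icc (0:ℝ) 1)ᶜ := by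
      ext p; simp [Set.mem_prod]
    rw [Filter.eventually_iff, mem_ae_iff, hset, Measure.prod_prod]
    have : μ ((Icc (0:ℝ) 1)ᶜ) = 0 := by
      rw [hμdef, Measure.restrict_apply (measurableSet_Icc.compl)]
      simp
    rw [this, mul_zero]
  have hFi : Integrable F (μ.prod μ) := by
    refine Integrable.mono' (g := fun p => |G p.1| * C) ?_ hFm.aestronglyMeasurable ?_
    · exact Integrable.mul_prod hGi.integrableOn.abs (integrable_const C)
    · filter_upwards [hsnd] with p hp
      rw [hFdef]
      simp only [Real.norm_eq_abs]
      split_ifs with h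
      · rw [abs_mul]
        exact mul_le_mul_of_nonneg_left (by simpa [Real.norm_eq_abs] using hC p.2 hp)
          (abs_nonneg _)
      · simpa using mul_nonneg (abs_nonneg (G p.1)) hC0
  have swap := integral_integral_swap (μ := μ) (ν := μ)
    (f := fun s u => if s < u then G s * lam' u else 0) hFi
  -- evaluate inner integrals on the left
  have eq1 : ∀ s ∈ Icc (0:ℝ) 1,
      (∫ u in Icc (0:ℝ) 1, if s < u then G s * lam' u else 0) = G s * (lam 1 - lam s) := by
    intro s hs
    have hind : (fun u => if s < u then G s * lam' u else 0)
        = (Set.Ioi s).indicator (fun u => G s * lam' u) := by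
      ext u; simp [Set.indicator_apply, Set.mem_Ioi]
    rw [hind, setIntegral_indicator measurableSet_Ioi]
    have hset : Icc (0:ℝ) 1 ∩ Set.Ioi s = Set.Ioc s 1 := by
      ext u
      simp only [Set.mem_inter_iff, Set.mem_Icc, Set.mem_Ioi, Set.mem_Ioc]
      constructor
      · rintro ⟨⟨_, h1⟩, h2⟩; exact ⟨h2, h1⟩
      · rintro ⟨h2, h1⟩; exact ⟨⟨hs.1.trans h2.le, h1⟩, h2⟩
    rw [hset, integral_const_mul, ← intervalIntegral.integral_of_le hs.2]
    congr 1
    refine intervalIntegral.integral_eq_sub_of_hasDerivAt (fun t ht => ?_) ?_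
    · refine hlam t ?_
      rw [Set.uIcc_of_le hs.2] at ht
      exact ⟨hs.1.trans ht.1, ht.2⟩
    · apply ContinuousOn.intervalIntegrable
      refine hlam'c.mono fun t ht => ?_
      rw [Set.uIcc_of_le hs.2] at ht
      exact ⟨hs.1.trans ht.1, ht.2⟩
  -- evaluate inner integrals on the right
  have eq2 : ∀ u ∈ Icc (0:ℝ) 1,
      (∫ s in Icc (0:ℝ) 1, if s < u then G s * lam' u else 0)
        = lam' u * ∫ r in (0:ℝ)..u, G r := by
    intro u hu
    have hind : (fun s => if s < u then G s * lam' u else 0)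
        = (Set.Iio u).indicator (fun s => G s * lam' u) := by
      ext v; simp [Set.indicator_apply, Set.mem_Iio]
    rw [hind, setIntegral_indicator measurableSet_Iio]
    have hset : Icc (0:ℝ) 1 ∩ Set.Iio u = Set.Ico 0 u := by
      ext v
      simp only [Set.mem_inter_iff, Set.mem_Icc, Set.mem_Iio, Set.mem_Ico]
      constructor
      · rintro ⟨⟨h0, _⟩, h2⟩; exact ⟨h0, h2⟩
      · rintro ⟨h0, h2⟩; exact ⟨⟨h0, h2.le.trans hu.2⟩, h2⟩
    rw [hset, integral_mul_const, integral_Ico_eq_integral_Ioo,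
      ← integral_Ioc_eq_integral_Ioo, ← intervalIntegral.integral_of_le hu.1, mul_comm]
  -- put everything together
  have hswap' : ∫ s in Icc (0:ℝ) 1, G s * (lam 1 - lam s)
      = ∫ u in Icc (0:ℝ) 1, lam' u * ∫ r in (0:ℝ)..u, G r := by
    rw [← setIntegral_congr_fun measurableSet_Icc eq1, swap,
      setIntegral_congr_fun measurableSet_Icc eq2]
  have hIccG : ∫ s in Icc (0:ℝ) 1, G s = ∫ r in (0:ℝ)..1, G r := by
    rw [integral_Icc_eq_integral_Ioc, ← intervalIntegral.integral_of_le zero_le_one]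
  have hint1 : IntegrableOn (fun s => lam s * G s) (Icc (0:ℝ) 1) := by
    refine IntegrableOn.continuousOn_mul ?_ hGi.integrableOn isCompact_Icc
    exact fun t ht => (hlam t ht).continuousAt.continuousWithinAt
  have hexpand : ∫ s in Icc (0:ℝ) 1, G s * (lam 1 - lam s)
      = lam 1 * (∫ r in (0:ℝ)..1, G r) - ∫ s in Icc (0:ℝ) 1, lam s * G s := by
    have : ∀ s, G s * (lam 1 - lam s) = lam 1 * G s - lam s * G s := fun s => by ring
    simp_rw [this]
    rw [integral_sub (hGi.integrableOn.const_mul _) hint1, integral_const_mul, hIccG]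
  rw [hexpand] at hswap'
  linarith [hswap']

/-- Duality lower bound for the energy, with multiplier `λ(s) = 2b/(a+bs)`. -/
lemma energy_lower_bound (v₀ x : ℝ) (hv₀ : 0 < v₀)
    (G : ℝ → ℝ) (hGi : Integrable G) (hGm : Measurable G)
    (hpos : ∀ s ∈ Icc (0:ℝ) 1, 0 ≤ v₀ + ∫ r in (0:ℝ)..s, G r)
    (hend : (v₀ + ∫ r in (0:ℝ)..1, G r) = x)
    (a b : ℝ) (ha : 0 < a) (hab : 0 < a + b) :
    ENNReal.ofReal (2*(2*b/(a+b))*(x - v₀) + 2*v₀*(2*b/(a+b) - 2*b/a))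
      ≤ ∫⁻ s in Icc (0:ℝ) 1, ENNReal.ofReal
          (if 0 < v₀ + ∫ r in (0:ℝ)..s, G r
            then G s ^ 2 / (v₀ + ∫ r in (0:ℝ)..s, G r) else 0) := by
  set φ : ℝ → ℝ := fun s => v₀ + ∫ r in (0:ℝ)..s, G r with hφdef
  set lam : ℝ → ℝ := fun t => 2*b/(a+b*t) with hlamdef
  set lam' : ℝ → ℝ := fun t => -(2*b^2)/(a+b*t)^2 with hlam'def
  have hden : ∀ t ∈ Icc (0:ℝ) 1, 0 < a + b*t := by
    intro t ht
    rcases eq_or_lt_of_le ht.2 with rfl | h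
    · simpa using hab
    · nlinarith [mul_nonneg ht.1 hab.le, mul_pos (sub_pos.2 h) ha]
  have hlam : ∀ t ∈ Icc (0:ℝ) 1, HasDerivAt lam (lam' t) t := by
    intro t ht
    have hd : HasDerivAt (fun u : ℝ => a + b*u) b t := by
      simpa using ((hasDerivAt_id t).const_mul b).const_add a
    have : HasDerivAt lam ((0 * (a + b * t) - 2 * b * b) / (a + b * t) ^ 2) t :=
      (hasDerivAt_const t (2*b)).div hd (ne_of_gt (hden t ht))
    convert this using 1
    rw [hlam'def]
    ring
  have hlamc : ContinuousOn lam (Icc (0:ℝ) 1) :=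
    fun t ht => ((hlam t ht).continuousAt).continuousWithinAt
  have hlam'c : ContinuousOn lam' (Icc (0:ℝ) 1) := by
    refine ContinuousOn.div continuousOn_const ?_ fun t ht => pow_ne_zero 2 (hden t ht).ne'
    exact ((continuous_const.add (continuous_const.mul continuous_id)).pow 2).continuousOn
  have hlam'm : Measurable lam' := by
    refine Measurable.div measurable_const ?_
    exact ((measurable_const.add (measurable_id.const_mul b)).pow_const 2)
  have hφcont : Continuous φ := continuous_const.add (hGi.continuous_primitive 0)
  -- pointwise a.e. inequality
  have h_ae : ∀ᵐ s ∂(volume.restrict (Icc (0:ℝ) 1)),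
      2*(lam s * G s) - lam s^2 * φ s ≤ (if 0 < φ s then G s^2/φ s else 0) := by
    filter_upwards [ae_zero_on_zero_set G hGi v₀ hpos, ae_restrict_mem measurableSet_Icc]
      with s h0 hsm
    have hps : (0:ℝ) ≤ φ s := hpos s hsm
    have h0' : φ s = 0 → G s = 0 := h0
    rcases lt_or_eq_of_le hps with hφpos | hφ0
    · rw [if_pos hφpos, le_div_iff₀ hφpos]
      nlinarith [sq_nonneg (G s - lam s * φ s)]
    · have hg0 : G s = 0 := h0' hφ0.symm
      rw [if_neg (by rw [← hφ0]; exact lt_irrefl _), hg0, ← hφ0]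
      ring_nf
      simp
  -- integrability
  have h1 : IntegrableOn (fun s => lam s * G s) (Icc (0:ℝ) 1) :=
    IntegrableOn.continuousOn_mul hlamc hGi.integrableOn isCompact_Icc
  have h2 : IntegrableOn (fun s => lam s^2 * φ s) (Icc (0:ℝ) 1) :=
    ContinuousOn.integrableOn_Icc ((hlamc.pow 2).mul hφcont.continuousOn)
  have hf1 : IntegrableOn (fun s => 2*(lam s * G s) - lam s^2 * φ s) (Icc (0:ℝ) 1) :=
    (h1.const_mul 2).sub h2
  -- the value of the linear functional
  have hkey := key_identity G hGi hGm lam lam' hlam hlam'c hlam'm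
  have hlam'int : IntegrableOn lam' (Icc (0:ℝ) 1) :=
    ContinuousOn.integrableOn_Icc hlam'c
  have hprimint : IntegrableOn (fun s => lam' s * ∫ r in (0:ℝ)..s, G r) (Icc (0:ℝ) 1) :=
    ContinuousOn.integrableOn_Icc (hlam'c.mul (hGi.continuous_primitive 0).continuousOn)
  have hlam'FTC : ∫ s in Icc (0:ℝ) 1, lam' s = lam 1 - lam 0 := by
    rw [integral_Icc_eq_integral_Ioc, ← intervalIntegral.integral_of_le zero_le_one]
    refine intervalIntegral.integral_eq_sub_of_hasDerivAt (fun t ht => ?_) ?_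
    · exact hlam t (by rwa [Set.uIcc_of_le zero_le_one] at ht)
    · exact ContinuousOn.intervalIntegrable (by rwa [Set.uIcc_of_le zero_le_one])
  have h2val : ∫ s in Icc (0:ℝ) 1, lam s^2 * φ s
      = -2 * ((∫ s in Icc (0:ℝ) 1, lam' s) * v₀ + ∫ s in Icc (0:ℝ) 1, lam' s * ∫ r in (0:ℝ)..s, G r) := by
    have step1 : ∫ s in Icc (0:ℝ) 1, lam s^2 * φ s
        = ∫ s in Icc (0:ℝ) 1, (-2) * (lam' s * v₀ + lam' s * ∫ r in (0:ℝ)..s, G r) := by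
      refine setIntegral_congr_fun measurableSet_Icc fun s hs => ?_
      have hd := hden s hs
      rw [hφdef, hlamdef, hlam'def]
      field_simp
      ring
    rw [step1, integral_const_mul, integral_add (hlam'int.mul_const v₀) hprimint,
      integral_mul_const]
  have hend' : ∫ r in (0:ℝ)..1, G r = x - v₀ := by
    linarith [hend]
  have hval : ∫ s in Icc (0:ℝ) 1, (2*(lam s * G s) - lam s^2 * φ s)
      = 2*(lam 1)*(x - v₀) + 2*v₀*(lam 1 - lam 0) := by
    rw [integral_sub (h1.const_mul 2) h2, integral_const_mul, hkey, h2val, hlam'FTC, hend']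
    ring
  have hlam1 : lam 1 = 2*b/(a+b) := by rw [hlamdef]; norm_num
  have hlam0 : lam 0 = 2*b/a := by rw [hlamdef]; norm_num
  calc ENNReal.ofReal (2*(2*b/(a+b))*(x - v₀) + 2*v₀*(2*b/(a+b) - 2*b/a))
      = ENNReal.ofReal (∫ s in Icc (0:ℝ) 1, (2*(lam s * G s) - lam s^2 * φ s)) := by
        rw [hval, hlam1, hlam0]
    _ ≤ ∫⁻ s in Icc (0:ℝ) 1, ENNReal.ofReal (2*(lam s * G s) - lam s^2 * φ s) :=
        ofReal_integral_le _ hf1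
    _ ≤ ∫⁻ s in Icc (0:ℝ) 1, ENNReal.ofReal
          (if 0 < φ s then G s^2/φ s else 0) := by
        refine lintegral_mono_ae ?_
        filter_upwards [h_ae] with s hs using ENNReal.ofReal_le_ofReal hs

lemma tendsto_lower_value (v₀ x : ℝ) (hv₀ : 0 < v₀) (hx : 0 ≤ x) :
    Tendsto (fun δ : ℝ =>
        2*(2*(Real.sqrt x - Real.sqrt v₀ + δ)/(Real.sqrt v₀ + (Real.sqrt x - Real.sqrt v₀ + δ)))*(x - v₀)
        + 2*v₀*(2*(Real.sqrt x - Real.sqrt v₀ + δ)/(Real.sqrt v₀ + (Real.sqrt x - Real.sqrt v₀ + δ))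
            - 2*(Real.sqrt x - Real.sqrt v₀ + δ)/Real.sqrt v₀))
      (𝓝[>] (0:ℝ)) (𝓝 (4*(Real.sqrt x - Real.sqrt v₀)^2)) := by
  set a := Real.sqrt v₀ with hadef
  set u := Real.sqrt x with hudef
  have ha : 0 < a := Real.sqrt_pos.2 hv₀
  have hu : 0 ≤ u := Real.sqrt_nonneg x
  have hx' : u^2 = x := Real.sq_sqrt hx
  have hv' : a^2 = v₀ := Real.sq_sqrt hv₀.le
  have hquot : Tendsto (fun δ : ℝ => u^2/(u+δ)) (𝓝[>] (0:ℝ)) (𝓝 u) := by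
    refine tendsto_of_tendsto_of_tendsto_of_le_of_le'
      (g := fun δ : ℝ => u - δ) (h := fun _ : ℝ => u) ?_ tendsto_const_nhds ?_ ?_
    · have : Tendsto (fun δ : ℝ => u - δ) (𝓝 0) (𝓝 (u - 0)) :=
        (continuous_const.sub continuous_id).tendsto 0
      simpa using this.mono_left nhdsWithin_le_nhds
    · filter_upwards [self_mem_nhdsWithin] with δ (hδ : (0:ℝ) < δ)
      rw [le_div_iff₀ (by positivity)]
      nlinarith
    · filter_upwards [self_mem_nhdsWithin] with δ (hδ : (0:ℝ) < δ)
      rw [div_le_iff₀ (by positivity)]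
      nlinarith
  have heq : ∀ᶠ δ in 𝓝[>] (0:ℝ),
      (fun δ : ℝ => 2*(2*(u - a + δ)/(a + (u - a + δ)))*(x - v₀)
        + 2*v₀*(2*(u - a + δ)/(a + (u - a + δ)) - 2*(u - a + δ)/a)) δ
      = 4*(u - a + δ)*(u^2/(u+δ) - a) := by
    filter_upwards [self_mem_nhdsWithin] with δ (hδ : (0:ℝ) < δ)
    have h1 : (0:ℝ) < u + δ := by positivity
    have h2 : a + (u - a + δ) = u + δ := by ring
    simp only [h2]
    rw [← hx', ← hv']
    field_simp
    ring
  have T1 : Tendsto (fun δ : ℝ => 4*(u - a + δ)) (𝓝[>] (0:ℝ)) (𝓝 (4*(u - a))) := by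
    have : Tendsto (fun δ : ℝ => 4*(u - a + δ)) (𝓝 0) (𝓝 (4*(u - a + 0))) :=
      (continuous_const.mul (continuous_const.add continuous_id)).tendsto 0
    simpa using this.mono_left nhdsWithin_le_nhds
  have hmain : Tendsto (fun δ : ℝ => 4*(u - a + δ)*(u^2/(u+δ) - a)) (𝓝[>] (0:ℝ))
      (𝓝 (4*(u - a)*(u - a))) := T1.mul (hquot.sub_const a)
  have : Tendsto (fun δ : ℝ => 4*(u - a + δ)*(u^2/(u+δ) - a)) (𝓝[>] (0:ℝ))
      (𝓝 (4*(u - a)^2)) := by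
    convert hmain using 2
    ring
  exact this.congr' (Filter.EventuallyEq.symm heq)

lemma upper_bound_member (ξ v₀ : ℝ) (hξ : 0 < ξ) (hv₀ : 0 < v₀) (x : ℝ) (hx : 0 ≤ x) :
    ∃ g : ℝ → ℝ, IntegrableOn g (Icc (0:ℝ) 1) ∧
      (∀ s ∈ Icc (0:ℝ) 1, 0 ≤ v₀ + ∫ r in (0:ℝ)..s, g r) ∧
      (v₀ + ∫ r in (0:ℝ)..1, g r) = x ∧
      ENNReal.ofReal (2 / ξ ^ 2 * (Real.sqrt x - Real.sqrt v₀) ^ 2) =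
        ENNReal.ofReal (1 / (2 * ξ ^ 2)) *
          ∫⁻ s in Icc (0:ℝ) 1, ENNReal.ofReal
            (if 0 < v₀ + ∫ r in (0:ℝ)..s, g r
              then g s ^ 2 / (v₀ + ∫ r in (0:ℝ)..s, g r) else 0) := by
  set a := Real.sqrt v₀ with hadef
  set u := Real.sqrt x with hudef
  have ha : 0 < a := Real.sqrt_pos.2 hv₀
  have hu : 0 ≤ u := Real.sqrt_nonneg x
  have hx' : u^2 = x := Real.sq_sqrt hx
  have hv' : a^2 = v₀ := Real.sq_sqrt hv₀.le
  set b := u - a with hbdef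
  set g₀ : ℝ → ℝ := fun r => 2*a*b + 2*b^2*r with hg₀def
  have hg₀cont : Continuous g₀ := by
    exact continuous_const.add (continuous_const.mul continuous_id)
  have hprim : ∀ s : ℝ, (∫ r in (0:ℝ)..s, g₀ r) = 2*a*b*s + b^2*s^2 := by
    intro s
    have hP : ∀ t : ℝ, HasDerivAt (fun t : ℝ => 2*a*b*t + b^2*t^2) (g₀ t) t := by
      intro t
      have h1 : HasDerivAt (fun t : ℝ => 2*a*b*t) (2*a*b) t := by
        simpa using (hasDerivAt_id t).const_mul (2*a*b)
      have h2 : HasDerivAt (fun t : ℝ => b^2*t^2) (b^2*(2*t)) t := by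
        simpa using (hasDerivAt_pow 2 t).const_mul (b^2)
      have : HasDerivAt (fun t : ℝ => 2*a*b*t + b^2*t^2) (2*a*b + b^2*(2*t)) t := h1.add h2
      convert this using 1
      rw [hg₀def]; ring
    have := intervalIntegral.integral_eq_sub_of_hasDerivAt
      (f := fun t : ℝ => 2*a*b*t + b^2*t^2) (f' := g₀) (a := 0) (b := s)
      (fun t _ => hP t) (hg₀cont.intervalIntegrable 0 s)
    simpa using this
  have hφval : ∀ s : ℝ, v₀ + (∫ r in (0:ℝ)..s, g₀ r) = (a + b*s)^2 := by
    intro s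
    rw [hprim, ← hv']
    ring
  have hend : (v₀ + ∫ r in (0:ℝ)..1, g₀ r) = x := by
    rw [hφval, ← hx', hbdef]
    ring_nf
  refine ⟨g₀, hg₀cont.integrableOn_Icc, fun s _ => by rw [hφval]; positivity, hend, ?_⟩
  have hae1 : ∀ᵐ s ∂(volume.restrict (Icc (0:ℝ) 1)), s ≠ 1 := by
    refine ae_restrict_of_ae ?_
    rw [ae_iff]
    refine measure_mono_null (fun s hs => ?_) (measure_singleton (1:ℝ))
    simpa using hs
  have hcongr : (∫⁻ s in Icc (0:ℝ) 1, ENNReal.ofReal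
        (if 0 < v₀ + ∫ r in (0:ℝ)..s, g₀ r
          then g₀ s ^ 2 / (v₀ + ∫ r in (0:ℝ)..s, g₀ r) else 0))
      = ∫⁻ _ in Icc (0:ℝ) 1, ENNReal.ofReal (4*b^2) := by
    refine lintegral_congr_ae ?_
    filter_upwards [hae1, ae_restrict_mem measurableSet_Icc] with s hs1 hsm
    have hlt : s < 1 := lt_of_le_of_ne hsm.2 hs1
    have hd : 0 < a + b*s := by
      have h2 : a + b*s = (1-s)*a + s*u := by rw [hbdef]; ring
      nlinarith [mul_pos (sub_pos.2 hlt) ha, mul_nonneg hsm.1 hu]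
    congr 1
    rw [hφval, if_pos (by positivity)]
    rw [div_eq_iff (by positivity)]
    rw [hg₀def]
    ring
  rw [hcongr, setLIntegral_const, Real.volume_Icc]
  norm_num
  rw [show (4:ℝ≥0∞) = ENNReal.ofReal 4 by norm_num, ← ENNReal.ofReal_mul (by norm_num),
    ← ENNReal.ofReal_mul (by positivity)]
  congr 1
  have hξ2 : ξ^2 ≠ 0 := pow_ne_zero 2 hξ.ne'
  field_simp
  ring

/-- Contraction of the Freidlin–Wentzell rate function for the square-root diffusion:
the minimal energy `(1/(2ξ²)) ∫₀¹ φ'(s)²/φ(s) 1_{φ(s)>0} ds` over nonnegative absolutely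
continuous paths `φ` with `φ(0) = v₀` and `φ(1) = x` equals `(2/ξ²)(√x − √v₀)²` for
`x ≥ 0`, and is `+∞` (infimum over the empty set) for `x < 0`. -/
theorem contracted_rate_function_eq
    (ξ v₀ : ℝ) (hξ : 0 < ξ) (hv₀ : 0 < v₀) (x : ℝ) :
    (0 ≤ x →
      sInf {E : ℝ≥0∞ | ∃ g : ℝ → ℝ, IntegrableOn g (Set.Icc 0 1) ∧
          (∀ s ∈ Set.Icc (0 : ℝ) 1, 0 ≤ v₀ + ∫ r in (0 : ℝ)..s, g r) ∧
          (v₀ + ∫ r in (0 : ℝ)..1, g r) = x ∧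
          E = ENNReal.ofReal (1 / (2 * ξ ^ 2)) *
              ∫⁻ s in Set.Icc (0 : ℝ) 1,
                ENNReal.ofReal
                  (if 0 < v₀ + ∫ r in (0 : ℝ)..s, g r
                    then g s ^ 2 / (v₀ + ∫ r in (0 : ℝ)..s, g r) else 0)}
        = ENNReal.ofReal (2 / ξ ^ 2 * (Real.sqrt x - Real.sqrt v₀) ^ 2))
    ∧ (x < 0 →
      {E : ℝ≥0∞ | ∃ g : ℝ → ℝ, IntegrableOn g (Set.Icc 0 1) ∧
          (∀ s ∈ Set.Icc (0 : ℝ) 1, 0 ≤ v₀ + ∫ r in (0 : ℝ)..s, g r) ∧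
          (v₀ + ∫ r in (0 : ℝ)..1, g r) = x ∧
          E = ENNReal.ofReal (1 / (2 * ξ ^ 2)) *
              ∫⁻ s in Set.Icc (0 : ℝ) 1,
                ENNReal.ofReal
                  (if 0 < v₀ + ∫ r in (0 : ℝ)..s, g r
                    then g s ^ 2 / (v₀ + ∫ r in (0 : ℝ)..s, g r) else 0)} = ∅
      ∧ sInf {E : ℝ≥0∞ | ∃ g : ℝ → ℝ, IntegrableOn g (Set.Icc 0 1) ∧
          (∀ s ∈ Set.Icc (0 : ℝ) 1, 0 ≤ v₀ + ∫ r in (0 : ℝ)..s, g r) ∧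
          (v₀ + ∫ r in (0 : ℝ)..1, g r) = x ∧
          E = ENNReal.ofReal (1 / (2 * ξ ^ 2)) *
              ∫⁻ s in Set.Icc (0 : ℝ) 1,
                ENNReal.ofReal
                  (if 0 < v₀ + ∫ r in (0 : ℝ)..s, g r
                    then g s ^ 2 / (v₀ + ∫ r in (0 : ℝ)..s, g r) else 0)} = ⊤) := by
  constructor
  · intro hx
    apply le_antisymm
    · obtain ⟨g₀, h1, h2, h3, h4⟩ := upper_bound_member ξ v₀ hξ hv₀ x hx
      exact sInf_le ⟨g₀, h1, h2, h3, h4⟩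
    · refine le_sInf fun E hE => ?_
      obtain ⟨g, hgint, hgpos, hgend, hEeq⟩ := hE
      -- pass to a measurable representative G of g on [0,1]
      have hsm0 : AEStronglyMeasurable g (volume.restrict (Icc (0:ℝ) 1)) := hgint.1
      set G₀ := hsm0.mk g with hG₀
      have hmk : g =ᵐ[volume.restrict (Icc (0:ℝ) 1)] G₀ := hsm0.ae_eq_mk
      set G : ℝ → ℝ := (Icc (0:ℝ) 1).indicator G₀ with hGdef
      have hGm : Measurable G :=
        (hsm0.stronglyMeasurable_mk.measurable).indicator measurableSet_Icc
      have hae : g =ᵐ[volume.restrict (Icc (0:ℝ) 1)] G := hmk.trans <| by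
        filter_upwards [ae_restrict_mem measurableSet_Icc] with s hs
        rw [hGdef, Set.indicator_of_mem hs]
      have hGi : Integrable G volume :=
        (integrable_indicator_iff measurableSet_Icc).2 (hgint.congr hmk)
      have hgimp : ∀ᵐ r ∂(volume : Measure ℝ), r ∈ Icc (0:ℝ) 1 → g r = G r :=
        (ae_restrict_iff' measurableSet_Icc).1 hae
      have hintEq : ∀ s ∈ Icc (0:ℝ) 1, (∫ r in (0:ℝ)..s, g r) = ∫ r in (0:ℝ)..s, G r := by
        intro s hs
        refine intervalIntegral.integral_congr_ae ?_
        filter_upwards [hgimp] with r hr hrI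
        rw [Set.uIoc_of_le hs.1] at hrI
        exact hr ⟨hrI.1.le, hrI.2.trans hs.2⟩
      have hpos' : ∀ s ∈ Icc (0:ℝ) 1, 0 ≤ v₀ + ∫ r in (0:ℝ)..s, G r := fun s hs => by
        rw [← hintEq s hs]; exact hgpos s hs
      have hend' : (v₀ + ∫ r in (0:ℝ)..1, G r) = x := by
        rw [← hintEq 1 ⟨zero_le_one, le_refl 1⟩]; exact hgend
      have hlint_eq : (∫⁻ s in Icc (0:ℝ) 1, ENNReal.ofReal
            (if 0 < v₀ + ∫ r in (0:ℝ)..s, g r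
              then g s ^ 2 / (v₀ + ∫ r in (0:ℝ)..s, g r) else 0))
          = ∫⁻ s in Icc (0:ℝ) 1, ENNReal.ofReal
            (if 0 < v₀ + ∫ r in (0:ℝ)..s, G r
              then G s ^ 2 / (v₀ + ∫ r in (0:ℝ)..s, G r) else 0) := by
        refine lintegral_congr_ae ?_
        filter_upwards [hae, ae_restrict_mem measurableSet_Icc] with s hgs hsm
        rw [hintEq s hsm, hgs]
      -- the family of lower bounds
      set Lfun : ℝ → ℝ := fun δ =>
        2*(2*(Real.sqrt x - Real.sqrt v₀ + δ)/(Real.sqrt v₀ + (Real.sqrt x - Real.sqrt v₀ + δ)))*(x - v₀)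
        + 2*v₀*(2*(Real.sqrt x - Real.sqrt v₀ + δ)/(Real.sqrt v₀ + (Real.sqrt x - Real.sqrt v₀ + δ))
            - 2*(Real.sqrt x - Real.sqrt v₀ + δ)/Real.sqrt v₀) with hLdef
      have hstep : ∀ δ : ℝ, 0 < δ → ENNReal.ofReal ((1/(2*ξ^2)) * Lfun δ) ≤ E := by
        intro δ hδ
        have hab : 0 < Real.sqrt v₀ + (Real.sqrt x - Real.sqrt v₀ + δ) := by
          have := Real.sqrt_nonneg x; linarith
        have hb := energy_lower_bound v₀ x hv₀ G hGi hGm hpos' hend'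
          (Real.sqrt v₀) (Real.sqrt x - Real.sqrt v₀ + δ) (Real.sqrt_pos.2 hv₀) hab
        rw [hEeq, hlint_eq, ENNReal.ofReal_mul (by positivity)]
        exact mul_le_mul_right hb _
      have htend : Tendsto (fun δ : ℝ => ENNReal.ofReal ((1/(2*ξ^2)) * Lfun δ)) (𝓝[>] (0:ℝ))
          (𝓝 (ENNReal.ofReal (2 / ξ ^ 2 * (Real.sqrt x - Real.sqrt v₀) ^ 2))) := by
        have h1 := tendsto_lower_value v₀ x hv₀ hx
        have h2 : Tendsto (fun δ : ℝ => (1/(2*ξ^2)) * Lfun δ) (𝓝[>] (0:ℝ))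
            (𝓝 ((1/(2*ξ^2)) * (4*(Real.sqrt x - Real.sqrt v₀)^2))) := h1.const_mul _
        have h3 : (1/(2*ξ^2)) * (4*(Real.sqrt x - Real.sqrt v₀)^2)
            = 2 / ξ ^ 2 * (Real.sqrt x - Real.sqrt v₀) ^ 2 := by
          have hξ2 : ξ^2 ≠ 0 := pow_ne_zero 2 hξ.ne'
          field_simp
          ring
        rw [h3] at h2
        exact (ENNReal.continuous_ofReal.tendsto _).comp h2
      exact le_of_tendsto htend
        (Filter.eventually_of_mem self_mem_nhdsWithin fun δ hδ => hstep δ hδ)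
  · intro hx
    have hempty : {E : ℝ≥0∞ | ∃ g : ℝ → ℝ, IntegrableOn g (Set.Icc 0 1) ∧
          (∀ s ∈ Set.Icc (0 : ℝ) 1, 0 ≤ v₀ + ∫ r in (0 : ℝ)..s, g r) ∧
          (v₀ + ∫ r in (0 : ℝ)..1, g r) = x ∧
          E = ENNReal.ofReal (1 / (2 * ξ ^ 2)) *
              ∫⁻ s in Set.Icc (0 : ℝ) 1,
                ENNReal.ofReal
                  (if 0 < v₀ + ∫ r in (0 : ℝ)..s, g r
                    then g s ^ 2 / (v₀ + ∫ r in (0 : ℝ)..s, g r) else 0)} = ∅ := by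
      rw [Set.eq_empty_iff_forall_notMem]
      rintro E ⟨g, -, hpos, hend, -⟩
      have := hpos 1 ⟨zero_le_one, le_refl 1⟩
      rw [hend] at this
      linarith
    exact ⟨hempty, by rw [hempty, sInf_empty]⟩
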